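/- Let (c_n) be bounded, τ > 0, and θ(t,x) := Σ_{n≥0} c_n e^{-n²π²t} √2 cos(nπx). Then for every ε ∈ (0,τ) there exist constants C, δ > 0 such that |∂_t^m ∂_x^n θ(t,x)| ≤ C · m!/δ^m · (n!)^(1/2)/δ^(n/2) for all (t,x) ∈ [ε,τ] × [0,1] and all m, n ≥ 0; i.e. θ is Gevrey of order 1 in t and 1/2 in x on [ε,τ]×[0,1]. -/

import Mathlib

open Real

namespace HeatGevreyAux

/-- single term of the differentiated series -/
noncomputable def term (c : ℕ → ℝ) (m n k : ℕ) (t x : ℝ) : ℝ :=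
  c k * (-((k : ℝ) ^ 2 * π ^ 2)) ^ m * Real.exp (-(k : ℝ) ^ 2 * π ^ 2 * t) *
    Real.sqrt 2 * ((k : ℝ) * π) ^ n * Real.cos ((k : ℝ) * π * x + n * (π / 2))

/-- uniform bound -/
noncomputable def U (a : ℝ) (m n k : ℕ) : ℝ :=
  ((k : ℝ) ^ 2 * π ^ 2) ^ m * ((k : ℝ) * π) ^ n * Real.exp (-(k : ℝ) ^ 2 * π ^ 2 * a)

lemma pow_le_fact_mul_exp {x : ℝ} (hx : 0 ≤ x) (n : ℕ) :
    x ^ n ≤ (n.factorial : ℝ) * Real.exp x := by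
  have h := Real.pow_div_factorial_le_exp x hx n
  have hf : (0 : ℝ) < (n.factorial : ℝ) := by positivity
  calc x ^ n = x ^ n / n.factorial * n.factorial := by field_simp
    _ ≤ Real.exp x * n.factorial := by
        exact mul_le_mul_of_nonneg_right h hf.le
    _ = (n.factorial : ℝ) * Real.exp x := mul_comm _ _

lemma summable_U {a : ℝ} (ha : 0 < a) (m n : ℕ) : Summable (fun k : ℕ => U a m n k) := by
  have hr : ‖Real.exp (-a)‖ < 1 := by
    rw [Real.norm_eq_abs, abs_of_pos (Real.exp_pos _)]
    exact Real.exp_lt_one_iff.2 (by linarith)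
  have hgeo := (summable_pow_mul_geometric_of_norm_lt_one (2 * m + n) hr).mul_left (π ^ (2 * m + n))
  apply hgeo.of_nonneg_of_le
  · intro k; unfold U; positivity
  · intro k
    unfold U
    have hπ : (0 : ℝ) < π := Real.pi_pos
    have h1 : ((k : ℝ) ^ 2 * π ^ 2) ^ m * ((k : ℝ) * π) ^ n
        = π ^ (2 * m + n) * ((k : ℝ) ^ (2 * m + n)) := by ring
    rw [h1, mul_assoc]
    apply mul_le_mul_of_nonneg_left ?_ (by positivity)
    apply mul_le_mul_of_nonneg_left ?_ (by positivity)
    rw [← Real.exp_nat_mul]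
    apply Real.exp_le_exp.2
    have hk2 : (k : ℝ) ≤ (k : ℝ) ^ 2 := by
      have : (k : ℕ) ≤ k ^ 2 := Nat.le_self_pow two_ne_zero k
      exact_mod_cast this
    have hπ2 : (1 : ℝ) ≤ π ^ 2 := by nlinarith [Real.pi_gt_three]
    nlinarith [mul_le_mul_of_nonneg_right hk2 ha.le,
      mul_le_mul_of_nonneg_left hπ2 (show (0:ℝ) ≤ (k:ℝ)^2 * a by positivity)]

lemma abs_term_le (c : ℕ → ℝ) (B : ℝ) (hc : ∀ n, |c n| ≤ B) (m n k : ℕ) {a t : ℝ}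
    (hat : a ≤ t) (x : ℝ) : |term c m n k t x| ≤ B * Real.sqrt 2 * U a m n k := by
  have hπ : (0 : ℝ) < π := Real.pi_pos
  have h1 : |term c m n k t x| = |c k| * ((k : ℝ) ^ 2 * π ^ 2) ^ m *
      Real.exp (-(k : ℝ) ^ 2 * π ^ 2 * t) * Real.sqrt 2 * ((k : ℝ) * π) ^ n *
      |Real.cos ((k : ℝ) * π * x + n * (π / 2))| := by
    unfold term
    rw [abs_mul, abs_mul, abs_mul, abs_mul, abs_mul, abs_pow, abs_neg,
      abs_of_nonneg (show (0:ℝ) ≤ (k:ℝ)^2*π^2 by positivity),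
      abs_of_nonneg (Real.exp_pos _).le,
      abs_of_nonneg (Real.sqrt_nonneg 2),
      abs_pow, abs_of_nonneg (show (0:ℝ) ≤ (k:ℝ)*π by positivity)]
  rw [h1]
  have h2 : Real.exp (-(k : ℝ) ^ 2 * π ^ 2 * t) ≤ Real.exp (-(k : ℝ) ^ 2 * π ^ 2 * a) := by
    apply Real.exp_le_exp.2
    nlinarith [mul_le_mul_of_nonneg_left hat (show (0:ℝ) ≤ (k:ℝ)^2 * π^2 by positivity)]
  calc |c k| * ((k : ℝ) ^ 2 * π ^ 2) ^ m * Real.exp (-(k : ℝ) ^ 2 * π ^ 2 * t) *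
        Real.sqrt 2 * ((k : ℝ) * π) ^ n * |Real.cos ((k : ℝ) * π * x + n * (π / 2))|
      ≤ B * ((k : ℝ) ^ 2 * π ^ 2) ^ m * Real.exp (-(k : ℝ) ^ 2 * π ^ 2 * a) *
        Real.sqrt 2 * ((k : ℝ) * π) ^ n * 1 := by
        have hB : 0 ≤ B := le_trans (abs_nonneg _) (hc 0)
        gcongr
        · exact hc k
        · exact Real.abs_cos_le_one _
    _ = B * Real.sqrt 2 * U a m n k := by unfold U; ring

lemma summable_term (c : ℕ → ℝ) (B : ℝ) (hc : ∀ n, |c n| ≤ B) (m n : ℕ) {t : ℝ}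
    (ht : 0 < t) (x : ℝ) : Summable (fun k => term c m n k t x) := by
  apply Summable.of_norm_bounded ((summable_U ht m n).mul_left (B * Real.sqrt 2))
  intro k
  simpa [Real.norm_eq_abs] using abs_term_le c B hc m n k (le_refl t) x

lemma hasDerivAt_term_x (c : ℕ → ℝ) (m n k : ℕ) (t x : ℝ) :
    HasDerivAt (fun x' => term c m n k t x') (term c m (n + 1) k t x) x := by
  have h1 : HasDerivAt (fun x' : ℝ => (k : ℝ) * π * x' + n * (π / 2)) ((k : ℝ) * π) x := by
    simpa using ((hasDerivAt_id x).const_mul ((k : ℝ) * π)).add_const ((n : ℝ) * (π / 2))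
  have h2 := (h1.cos).const_mul
    (c k * (-((k : ℝ) ^ 2 * π ^ 2)) ^ m * Real.exp (-(k : ℝ) ^ 2 * π ^ 2 * t) *
      Real.sqrt 2 * ((k : ℝ) * π) ^ n)
  refine h2.congr_deriv ?_
  unfold term
  have harg : (k : ℝ) * π * x + (↑(n + 1) : ℝ) * (π / 2)
      = ((k : ℝ) * π * x + n * (π / 2)) + π / 2 := by push_cast; ring
  rw [harg, Real.cos_add_pi_div_two]
  ring

lemma hasDerivAt_term_t (c : ℕ → ℝ) (m n k : ℕ) (x t : ℝ) :
    HasDerivAt (fun t' => term c m n k t' x) (term c (m + 1) n k t x) t := by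
  have h1 : HasDerivAt (fun t' : ℝ => -(k : ℝ) ^ 2 * π ^ 2 * t') (-(k : ℝ) ^ 2 * π ^ 2) t := by
    exact ((hasDerivAt_id' t).const_mul (-(k : ℝ) ^ 2 * π ^ 2)).congr_deriv (mul_one _)
  have h2 := (((h1.exp.const_mul (c k * (-((k : ℝ) ^ 2 * π ^ 2)) ^ m)).mul_const
      (Real.sqrt 2)).mul_const (((k : ℝ) * π) ^ n)).mul_const
      (Real.cos ((k : ℝ) * π * x + n * (π / 2)))
  refine h2.congr_deriv ?_
  unfold term; ring


noncomputable def S (c : ℕ → ℝ) (m n : ℕ) (t x : ℝ) : ℝ := ∑' k, term c m n k t x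

lemma hasDerivAt_S_x (c : ℕ → ℝ) (B : ℝ) (hc : ∀ n, |c n| ≤ B) (m n : ℕ) {t : ℝ}
    (ht : 0 < t) (x : ℝ) :
    HasDerivAt (fun x' => S c m n t x') (S c m (n + 1) t x) x := by
  unfold S
  exact hasDerivAt_tsum ((summable_U ht m (n + 1)).mul_left (B * Real.sqrt 2))
    (fun k y => hasDerivAt_term_x c m n k t y)
    (fun k y => by
      simpa [Real.norm_eq_abs] using abs_term_le c B hc m (n + 1) k (le_refl t) y)
    (summable_term c B hc m n ht x) x

lemma hasDerivAt_S_t (c : ℕ → ℝ) (B : ℝ) (hc : ∀ n, |c n| ≤ B) (m n : ℕ) {t : ℝ}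
    (ht : 0 < t) (x : ℝ) :
    HasDerivAt (fun t' => S c m n t' x) (S c (m + 1) n t x) t := by
  unfold S
  have h2 : t ∈ Set.Ioi (t / 2) := Set.mem_Ioi.mpr (half_lt_self ht)
  exact hasDerivAt_tsum_of_isPreconnected
    ((summable_U (half_pos ht) (m + 1) n).mul_left (B * Real.sqrt 2))
    isOpen_Ioi isPreconnected_Ioi
    (fun k y _ => hasDerivAt_term_t c m n k x y)
    (fun k y hy => by
      simpa [Real.norm_eq_abs] using
        abs_term_le c B hc (m + 1) n k (le_of_lt (Set.mem_Ioi.mp hy)) x)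
    h2 (summable_term c B hc m n ht x) h2

lemma iteratedDeriv_S_t (c : ℕ → ℝ) (B : ℝ) (hc : ∀ n, |c n| ≤ B) (n : ℕ) (x : ℝ) (m : ℕ) :
    ∀ t : ℝ, 0 < t → iteratedDeriv m (fun t' => S c 0 n t' x) t = S c m n t x := by
  induction m with
  | zero => intro t _; simp [iteratedDeriv_zero]
  | succ m ih =>
    intro t ht
    rw [iteratedDeriv_succ]
    have hev : iteratedDeriv m (fun t' => S c 0 n t' x) =ᶠ[nhds t]
        (fun t' => S c m n t' x) := by
      filter_upwards [isOpen_Ioi.mem_nhds (Set.mem_Ioi.mpr ht)] with y hy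
      exact ih y hy
    rw [hev.deriv_eq]
    exact (hasDerivAt_S_t c B hc m n ht x).deriv

lemma iteratedDeriv_congr_ev {f g : ℝ → ℝ} {t : ℝ} (h : f =ᶠ[nhds t] g) (m : ℕ) :
    iteratedDeriv m f =ᶠ[nhds t] iteratedDeriv m g := by
  induction m with
  | zero => simpa [iteratedDeriv_zero] using h
  | succ m ih => simp only [iteratedDeriv_succ]; exact ih.deriv

lemma iterx (c : ℕ → ℝ) (B : ℝ) (hc : ∀ n, |c n| ≤ B) (θ : ℝ → ℝ → ℝ)
    (hθ : ∀ t x, θ t x = ∑' k : ℕ, c k * Real.exp (-(k : ℝ) ^ 2 * π ^ 2 * t) *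
      Real.sqrt 2 * Real.cos ((k : ℝ) * π * x)) (n : ℕ) {t : ℝ} (ht : 0 < t) :
    ∀ x, iteratedDeriv n (fun x' => θ t x') x = S c 0 n t x := by
  induction n with
  | zero =>
    intro x
    simp only [iteratedDeriv_zero]
    rw [hθ]
    unfold S
    apply tsum_congr
    intro k
    unfold term
    simp
  | succ n ih =>
    intro x
    rw [iteratedDeriv_succ]
    have hfun : iteratedDeriv n (fun x' => θ t x') = fun x' => S c 0 n t x' := funext ih
    rw [hfun]
    exact (hasDerivAt_S_x c B hc 0 n ht x).deriv

lemma summable_exp {a : ℝ} (ha : 0 < a) :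
    Summable (fun k : ℕ => Real.exp (-(k : ℝ) ^ 2 * π ^ 2 * a)) := by
  simpa [U] using summable_U ha 0 0

lemma U_le {ε : ℝ} (hε : 0 < ε) (m n k : ℕ) :
    U ε m n k ≤ ((m.factorial : ℝ) / (ε / 3) ^ m) *
      Real.sqrt ((n.factorial : ℝ) / (ε / 3) ^ n) *
      Real.exp (-(k : ℝ) ^ 2 * π ^ 2 * (ε / 2)) := by
  have hπ : (0 : ℝ) < π := Real.pi_pos
  set δ := ε / 3 with hδ
  have hδ0 : 0 < δ := by rw [hδ]; positivity
  set y := (k : ℝ) ^ 2 * π ^ 2 with hy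
  have hy0 : 0 ≤ y := by rw [hy]; positivity
  have h1 : y ^ m ≤ (m.factorial : ℝ) / δ ^ m * Real.exp (δ * y) := by
    have h := pow_le_fact_mul_exp (mul_nonneg hδ0.le hy0) m
    rw [mul_pow] at h
    rw [div_mul_eq_mul_div, le_div_iff₀ (by positivity)]
    rw [mul_comm (y ^ m)]
    exact h
  have hsq : (((k : ℝ) * π) ^ n) ^ 2 = y ^ n := by
    rw [hy, ← pow_mul, mul_comm n 2, pow_mul, mul_pow]
  have h2' : ((k : ℝ) * π) ^ n ≤
      Real.sqrt ((n.factorial : ℝ) / δ ^ n * Real.exp (δ * y)) := by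
    rw [Real.le_sqrt (by positivity) (by positivity), hsq]
    have h := pow_le_fact_mul_exp (mul_nonneg hδ0.le hy0) n
    rw [mul_pow] at h
    rw [div_mul_eq_mul_div, le_div_iff₀ (by positivity)]
    rw [mul_comm (y ^ n)]
    exact h
  have h2 : ((k : ℝ) * π) ^ n ≤
      Real.sqrt ((n.factorial : ℝ) / δ ^ n) * Real.exp (δ * y / 2) := by
    rwa [Real.sqrt_mul (by positivity), ← Real.exp_half] at h2'
  have hcomb : Real.exp (δ * y) * Real.exp (δ * y / 2) *
      Real.exp (-(k : ℝ) ^ 2 * π ^ 2 * ε) =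
      Real.exp (-(k : ℝ) ^ 2 * π ^ 2 * (ε / 2)) := by
    rw [← Real.exp_add, ← Real.exp_add]
    congr 1
    rw [hδ, hy]; ring
  have hUeq : U ε m n k = y ^ m * ((k : ℝ) * π) ^ n *
      Real.exp (-(k : ℝ) ^ 2 * π ^ 2 * ε) := by rw [U, hy]
  rw [hUeq]
  calc y ^ m * ((k : ℝ) * π) ^ n * Real.exp (-(k : ℝ) ^ 2 * π ^ 2 * ε)
      ≤ ((m.factorial : ℝ) / δ ^ m * Real.exp (δ * y)) *
        (Real.sqrt ((n.factorial : ℝ) / δ ^ n) * Real.exp (δ * y / 2)) *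
        Real.exp (-(k : ℝ) ^ 2 * π ^ 2 * ε) := by
        apply mul_le_mul_of_nonneg_right _ (Real.exp_pos _).le
        exact mul_le_mul h1 h2 (by positivity) (by positivity)
    _ = ((m.factorial : ℝ) / δ ^ m) * Real.sqrt ((n.factorial : ℝ) / δ ^ n) *
        (Real.exp (δ * y) * Real.exp (δ * y / 2) *
          Real.exp (-(k : ℝ) ^ 2 * π ^ 2 * ε)) := by ring
    _ = ((m.factorial : ℝ) / δ ^ m) * Real.sqrt ((n.factorial : ℝ) / δ ^ n) *
        Real.exp (-(k : ℝ) ^ 2 * π ^ 2 * (ε / 2)) := by rw [hcomb]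

end HeatGevreyAux
theorem heat_solution_gevrey_regularity
    (c : ℕ → ℝ) (B : ℝ) (hc : ∀ n, |c n| ≤ B) (τ ε : ℝ) (hτ : 0 < τ)
    (hε : ε ∈ Set.Ioo 0 τ) (θ : ℝ → ℝ → ℝ)
    (hθ : ∀ t x, θ t x = ∑' n : ℕ, c n * Real.exp (-(n : ℝ) ^ 2 * π ^ 2 * t) *
      Real.sqrt 2 * Real.cos ((n : ℝ) * π * x)) :
    ∃ C δ : ℝ, 0 < C ∧ 0 < δ ∧
      ∀ m n : ℕ, ∀ t ∈ Set.Icc ε τ, ∀ x ∈ Set.Icc (0 : ℝ) 1,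
        |iteratedDeriv m (fun t' => iteratedDeriv n (fun x' => θ t' x') x) t| ≤
          C * ((Nat.factorial m : ℝ) / δ ^ m) *
            ((Nat.factorial n : ℝ) ^ ((1 : ℝ) / 2) / δ ^ ((n : ℝ) / 2)) := by
  open HeatGevreyAux in
  obtain ⟨hε0, hετ⟩ := hε
  have hB0 : 0 ≤ B := le_trans (abs_nonneg _) (hc 0)
  set E : ℝ := ∑' k : ℕ, Real.exp (-(k : ℝ) ^ 2 * π ^ 2 * (ε / 2)) with hE
  have hEsum := summable_exp (half_pos hε0)
  have hEpos : 0 < E := hEsum.tsum_pos (fun k => (Real.exp_pos _).le) 0 (Real.exp_pos _)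
  have hδ0 : (0 : ℝ) < ε / 3 := by positivity
  refine ⟨(B + 1) * Real.sqrt 2 * E, ε / 3, by positivity, hδ0, ?_⟩
  intro m n t ht x _
  have ht0 : 0 < t := lt_of_lt_of_le hε0 ht.1
  -- identify the iterated derivative with the differentiated series
  have hout : iteratedDeriv m (fun t' => iteratedDeriv n (fun x' => θ t' x') x) t
      = S c m n t x := by
    have hev : (fun t' => iteratedDeriv n (fun x' => θ t' x') x) =ᶠ[nhds t]
        (fun t' => S c 0 n t' x) := by
      filter_upwards [isOpen_Ioi.mem_nhds (Set.mem_Ioi.mpr ht0)] with y hy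
      exact iterx c B hc θ hθ n hy x
    rw [(iteratedDeriv_congr_ev hev m).eq_of_nhds]
    exact iteratedDeriv_S_t c B hc n x m t ht0
  rw [hout]
  -- estimate the series
  have hsumm := summable_term c B hc m n ht0 x
  have hU := summable_U hε0 m n
  have hRsum : Summable (fun k : ℕ =>
      ((m.factorial : ℝ) / (ε / 3) ^ m) * Real.sqrt ((n.factorial : ℝ) / (ε / 3) ^ n) *
        Real.exp (-(k : ℝ) ^ 2 * π ^ 2 * (ε / 2))) := hEsum.mul_left _
  have habs : |S c m n t x| ≤ B * Real.sqrt 2 *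
      (((m.factorial : ℝ) / (ε / 3) ^ m) * Real.sqrt ((n.factorial : ℝ) / (ε / 3) ^ n) * E) := by
    have h1 : |S c m n t x| ≤ ∑' k, (B * Real.sqrt 2 * U ε m n k) := by
      unfold S
      calc |∑' k, term c m n k t x| ≤ ∑' k, |term c m n k t x| := by
            simpa [Real.norm_eq_abs] using norm_tsum_le_tsum_norm (f := fun k => term c m n k t x)
              (by simpa [Real.norm_eq_abs] using hsumm.abs)
        _ ≤ ∑' k, (B * Real.sqrt 2 * U ε m n k) :=
            Summable.tsum_le_tsum (fun k => abs_term_le c B hc m n k ht.1 x) hsumm.abs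
              (hU.mul_left _)
    have h2 : ∑' k, (B * Real.sqrt 2 * U ε m n k)
        = B * Real.sqrt 2 * ∑' k, U ε m n k := tsum_mul_left
    have h3 : ∑' k, U ε m n k ≤
        ((m.factorial : ℝ) / (ε / 3) ^ m) * Real.sqrt ((n.factorial : ℝ) / (ε / 3) ^ n) * E := by
      rw [hE, ← tsum_mul_left]
      exact Summable.tsum_le_tsum (fun k => U_le hε0 m n k) hU hRsum
    calc |S c m n t x| ≤ ∑' k, (B * Real.sqrt 2 * U ε m n k) := h1
      _ = B * Real.sqrt 2 * ∑' k, U ε m n k := h2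
      _ ≤ B * Real.sqrt 2 * (((m.factorial : ℝ) / (ε / 3) ^ m) *
          Real.sqrt ((n.factorial : ℝ) / (ε / 3) ^ n) * E) := by
          apply mul_le_mul_of_nonneg_left h3 (by positivity)
  -- convert sqrt to rpow and finish
  have hkey : Real.sqrt ((n.factorial : ℝ) / (ε / 3) ^ n)
      = (n.factorial : ℝ) ^ ((1 : ℝ) / 2) / (ε / 3) ^ ((n : ℝ) / 2) := by
    rw [Real.sqrt_div (by positivity), Real.sqrt_eq_rpow, Real.sqrt_eq_rpow,
      ← Real.rpow_natCast (ε / 3) n, ← Real.rpow_mul hδ0.le]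
    congr 1
    ring
  calc |S c m n t x| ≤ B * Real.sqrt 2 *
        (((m.factorial : ℝ) / (ε / 3) ^ m) * Real.sqrt ((n.factorial : ℝ) / (ε / 3) ^ n) * E)
        := habs
    _ = ((m.factorial : ℝ) / (ε / 3) ^ m) * Real.sqrt ((n.factorial : ℝ) / (ε / 3) ^ n) *
        (B * (Real.sqrt 2 * E)) := by ring
    _ ≤ ((m.factorial : ℝ) / (ε / 3) ^ m) * Real.sqrt ((n.factorial : ℝ) / (ε / 3) ^ n) *
        ((B + 1) * (Real.sqrt 2 * E)) := by
        apply mul_le_mul_of_nonneg_left _ (by positivity)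
        apply mul_le_mul_of_nonneg_right (by linarith) (by positivity)
    _ = (B + 1) * Real.sqrt 2 * E * ((m.factorial : ℝ) / (ε / 3) ^ m) *
        Real.sqrt ((n.factorial : ℝ) / (ε / 3) ^ n) := by ring
    _ = (B + 1) * Real.sqrt 2 * E * ((m.factorial : ℝ) / (ε / 3) ^ m) *
        ((n.factorial : ℝ) ^ ((1 : ℝ) / 2) / (ε / 3) ^ ((n : ℝ) / 2)) := by rw [hkey]
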